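/- Let $1 \le s \le d_1 \le d_2 \le m$ be integers, and let $D_1, D_2$ be independent random subsets of $\{1,\dots,m\}$, with $D_i$ uniformly distributed over all subsets of size $d_i$. Then $\mathbb{P}(|D_1 \cap D_2| = s) \ge \left(1 - \frac{(d_1-s)(d_2-s)}{m+1-d_1}\right) \binom{d_1}{s}\binom{d_2}{s}\binom{m}{s}^{-1}$. -/

import Mathlib

open Finset

/-- Key numeric inequality: `(a+1)(C(b,k) - C(a,k)) ≤ (b-a)·k·C(b,k)`. -/
lemma choose_diff_bound (k : ℕ) : ∀ a b : ℕ, a ≤ b →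
    (a + 1) * (b.choose k - a.choose k) ≤ (b - a) * k * b.choose k := by
  intro a b hab
  induction b, hab using Nat.le_induction with
  | base => simp
  | succ b hab ih =>
    rcases k with _ | k'
    · simp
    have h1 : a.choose (k' + 1) ≤ b.choose (k' + 1) := Nat.choose_le_choose _ hab
    have h2 : (b + 1).choose (k' + 1) = b.choose k' + b.choose (k' + 1) :=
      Nat.choose_succ_succ b k'
    have h3 : (b + 1) * b.choose k' = (k' + 1) * (b + 1).choose (k' + 1) := by
      rw [mul_comm (k' + 1)]; exact Nat.add_one_mul_choose_eq b k'
    have h4 : b.choose (k' + 1) ≤ (b + 1).choose (k' + 1) :=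
      Nat.choose_le_choose _ (Nat.le_succ b)
    have hsplit : (b + 1).choose (k' + 1) - a.choose (k' + 1)
        = b.choose k' + (b.choose (k' + 1) - a.choose (k' + 1)) := by omega
    rw [hsplit, Nat.mul_add]
    have e1 : (a + 1) * b.choose k' ≤ (k' + 1) * (b + 1).choose (k' + 1) := by
      rw [← h3]; exact Nat.mul_le_mul_right _ (by omega)
    have e2 : (a + 1) * (b.choose (k' + 1) - a.choose (k' + 1))
        ≤ (b - a) * (k' + 1) * (b + 1).choose (k' + 1) :=
      le_trans ih (Nat.mul_le_mul_left _ h4)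
    have hba : b + 1 - a = (b - a) + 1 := by omega
    calc (a + 1) * b.choose k' + (a + 1) * (b.choose (k' + 1) - a.choose (k' + 1))
        ≤ (k' + 1) * (b + 1).choose (k' + 1) + (b - a) * (k' + 1) * (b + 1).choose (k' + 1) :=
          Nat.add_le_add e1 e2
      _ = (b + 1 - a) * (k' + 1) * (b + 1).choose (k' + 1) := by rw [hba]; ring

/-- Counting subsets `B` of size `d` with `|A ∩ B| = s`. -/
lemma count_inter {α : Type*} [Fintype α] [DecidableEq α] (A : Finset α) (d s : ℕ)
    (hs : s ≤ d) :
    ((Finset.univ.powersetCard d).filter (fun B => (A ∩ B).card = s)).card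
      = (A.card.choose s) * ((Fintype.card α - A.card).choose (d - s)) := by
  have hcompl : Aᶜ.card = Fintype.card α - A.card := Finset.card_compl A
  rw [← Finset.card_powersetCard, ← hcompl, ← Finset.card_powersetCard,
    ← Finset.card_product]
  apply Finset.card_bij' (fun B _ => (A ∩ B, B \ A)) (fun p _ => p.1 ∪ p.2)
  · intro B hB
    simp only [Finset.mem_filter, Finset.mem_powersetCard] at hB
    obtain ⟨⟨_, hcard⟩, hABs⟩ := hB
    simp only [Finset.mem_product, Finset.mem_powersetCard]
    refine ⟨⟨Finset.inter_subset_left, hABs⟩, ⟨fun x hx => ?_, ?_⟩⟩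
    · simp only [Finset.mem_sdiff] at hx
      simpa using hx.2
    · have := Finset.card_inter_add_card_sdiff B A
      rw [Finset.inter_comm] at hABs
      omega
  · intro p hp
    simp only [Finset.mem_product, Finset.mem_powersetCard] at hp
    obtain ⟨⟨hC, hCc⟩, hD, hDc⟩ := hp
    have hdisj : Disjoint p.1 p.2 := by
      refine Finset.disjoint_left.2 fun x hx hx2 => ?_
      have := hD hx2
      simp only [Finset.mem_compl] at this
      exact this (hC hx)
    simp only [Finset.mem_filter, Finset.mem_powersetCard]
    have hint : A ∩ (p.1 ∪ p.2) = p.1 := by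
      rw [Finset.inter_union_distrib_left]
      have h1 : A ∩ p.1 = p.1 := Finset.inter_eq_right.2 hC
      have h2 : A ∩ p.2 = ∅ := by
        refine Finset.eq_empty_of_forall_notMem fun x hx => ?_
        simp only [Finset.mem_inter] at hx
        have := hD hx.2
        simp only [Finset.mem_compl] at this
        exact this hx.1
      rw [h1, h2, Finset.union_empty]
    refine ⟨⟨Finset.subset_univ _, ?_⟩, by rw [hint, hCc]⟩
    rw [Finset.card_union_of_disjoint hdisj, hCc, hDc]
    omega
  · intro B hB
    show A ∩ B ∪ B \ A = B
    rw [Finset.inter_comm, Finset.union_comm, Finset.sdiff_union_inter]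
  · intro p hp
    simp only [Finset.mem_product, Finset.mem_powersetCard] at hp
    obtain ⟨⟨hC, hCc⟩, hD, hDc⟩ := hp
    have hint : A ∩ (p.1 ∪ p.2) = p.1 := by
      rw [Finset.inter_union_distrib_left]
      have h1 : A ∩ p.1 = p.1 := Finset.inter_eq_right.2 hC
      have h2 : A ∩ p.2 = ∅ := by
        refine Finset.eq_empty_of_forall_notMem fun x hx => ?_
        simp only [Finset.mem_inter] at hx
        have := hD hx.2
        simp only [Finset.mem_compl] at this
        exact this hx.1
      rw [h1, h2, Finset.union_empty]
    have hsd : (p.1 ∪ p.2) \ A = p.2 := by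
      rw [Finset.union_sdiff_distrib]
      have h1 : p.1 \ A = ∅ := Finset.sdiff_eq_empty_iff_subset.2 hC
      have h2 : p.2 \ A = p.2 := by
        refine Finset.sdiff_eq_self_iff_disjoint.2 ?_
        refine Finset.disjoint_left.2 fun x hx hx2 => ?_
        have := hD hx
        simp only [Finset.mem_compl] at this
        exact this hx2
      rw [h1, h2, Finset.empty_union]
    show (A ∩ (p.1 ∪ p.2), (p.1 ∪ p.2) \ A) = p
    rw [hint, hsd]

lemma total_count (m d₁ d₂ s : ℕ) (h1 : s ≤ d₁) (h2 : d₁ ≤ d₂) :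
    (((Finset.univ.powersetCard d₁ ×ˢ Finset.univ.powersetCard d₂ :
        Finset (Finset (Fin m) × Finset (Fin m))).filter
        (fun p => (p.1 ∩ p.2).card = s)).card
      = m.choose d₁ * (d₁.choose s * ((m - d₁).choose (d₂ - s)))) := by
  rw [Finset.card_filter, Finset.sum_product]
  have : ∀ A ∈ (Finset.univ.powersetCard d₁ : Finset (Finset (Fin m))),
      (∑ B ∈ (Finset.univ.powersetCard d₂ : Finset (Finset (Fin m))),
        if (A ∩ B).card = s then 1 else 0)
      = d₁.choose s * ((m - d₁).choose (d₂ - s)) := by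
    intro A hA
    simp only [Finset.mem_powersetCard] at hA
    rw [← Finset.card_filter, count_inter A d₂ s (le_trans h1 h2), hA.2,
      Fintype.card_fin]
  rw [Finset.sum_congr rfl this, Finset.sum_const, Finset.card_powersetCard,
    Finset.card_univ, Fintype.card_fin, smul_eq_mul]

theorem stmt_1 (m d₁ d₂ s : ℕ) (hs : 1 ≤ s) (h1 : s ≤ d₁) (h2 : d₁ ≤ d₂) (h3 : d₂ ≤ m) :
    (1 - ((d₁ : ℝ) - s) * ((d₂ : ℝ) - s) / ((m : ℝ) + 1 - d₁)) *
      ((d₁.choose s : ℝ) * (d₂.choose s : ℝ) / (m.choose s : ℝ)) ≤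
    (((Finset.univ.powersetCard d₁ ×ˢ Finset.univ.powersetCard d₂ :
        Finset (Finset (Fin m) × Finset (Fin m))).filter
        (fun p => (p.1 ∩ p.2).card = s)).card : ℝ) /
      ((m.choose d₁ : ℝ) * (m.choose d₂ : ℝ)) := by
  rw [total_count m d₁ d₂ s h1 h2]
  have hd1m : d₁ ≤ m := le_trans h2 h3
  have hsm : s ≤ m := le_trans h1 hd1m
  set C1 : ℝ := (d₁.choose s : ℝ) with hC1
  set C2 : ℝ := (d₂.choose s : ℝ) with hC2
  set Cms : ℝ := (m.choose s : ℝ) with hCms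
  set Cmd1 : ℝ := (m.choose d₁ : ℝ) with hCmd1
  set Cmd2 : ℝ := (m.choose d₂ : ℝ) with hCmd2
  set Ca : ℝ := ((m - d₁).choose (d₂ - s) : ℝ) with hCa
  set Cb : ℝ := ((m - s).choose (d₂ - s) : ℝ) with hCb
  set L : ℝ := 1 - ((d₁ : ℝ) - s) * ((d₂ : ℝ) - s) / ((m : ℝ) + 1 - d₁) with hL
  have hCmspos : (0:ℝ) < Cms := by rw [hCms]; exact_mod_cast Nat.choose_pos hsm
  have hCmd1pos : (0:ℝ) < Cmd1 := by rw [hCmd1]; exact_mod_cast Nat.choose_pos hd1m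
  have hCmd2pos : (0:ℝ) < Cmd2 := by rw [hCmd2]; exact_mod_cast Nat.choose_pos h3
  have hC1nn : (0:ℝ) ≤ C1 := by positivity
  have hqpos : (0:ℝ) < (m : ℝ) + 1 - d₁ := by
    have : (d₁ : ℝ) ≤ m := by exact_mod_cast hd1m
    linarith
  -- key inequality
  have key : L * Cb ≤ Ca := by
    have hnat := choose_diff_bound (d₂ - s) (m - d₁) (m - s) (by omega)
    have hle : (m - d₁).choose (d₂ - s) ≤ (m - s).choose (d₂ - s) :=
      Nat.choose_le_choose _ (by omega)
    have hcast : ((m : ℝ) + 1 - d₁) * (Cb - Ca) ≤ ((d₁ : ℝ) - s) * ((d₂ : ℝ) - s) * Cb := by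
      have hrw : m - s - (m - d₁) = d₁ - s := by omega
      rw [hrw] at hnat
      have h := (Nat.cast_le (α := ℝ)).2 hnat
      push_cast [Nat.cast_sub hle, Nat.cast_sub h1, Nat.cast_sub hsm,
        Nat.cast_sub hd1m, Nat.cast_sub (le_trans h1 h2)] at h
      rw [hCa, hCb]
      push_cast [Nat.cast_sub (le_trans h1 h2)]
      nlinarith [h]
    rw [hL, sub_mul, one_mul, sub_le_iff_le_add]
    have h4 : Cb - Ca ≤ ((d₁:ℝ) - s) * ((d₂:ℝ) - s) * Cb / ((m:ℝ) + 1 - d₁) :=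
      (le_div_iff₀ hqpos).2 (by nlinarith [hcast])
    have h5 : ((d₁:ℝ) - s) * ((d₂:ℝ) - s) / ((m:ℝ) + 1 - d₁) * Cb
        = ((d₁:ℝ) - s) * ((d₂:ℝ) - s) * Cb / ((m:ℝ) + 1 - d₁) := by ring
    linarith
  -- identity
  have hid : Cmd2 * C2 = Cms * Cb := by
    rw [hCmd2, hC2, hCms, hCb]
    exact_mod_cast congrArg (Nat.cast (R := ℝ)) (Nat.choose_mul (n := m) (k := d₂) (le_trans h1 h2))
  have goal2 : L * (C1 * C2) * Cmd2 ≤ C1 * Ca * Cms := by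
    calc L * (C1 * C2) * Cmd2 = L * C1 * (Cmd2 * C2) := by ring
      _ = L * C1 * (Cms * Cb) := by rw [hid]
      _ = (L * Cb) * (C1 * Cms) := by ring
      _ ≤ Ca * (C1 * Cms) := mul_le_mul_of_nonneg_right key (by positivity)
      _ = C1 * Ca * Cms := by ring
  push_cast
  rw [show L * (C1 * C2 / Cms) = L * (C1 * C2) / Cms from by ring,
    show (Cmd1 * (C1 * Ca)) / (Cmd1 * Cmd2) = (C1 * Ca) / Cmd2 from
      mul_div_mul_left _ _ (ne_of_gt hCmd1pos),
    div_le_div_iff₀ hCmspos hCmd2pos]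
  exact goal2
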